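/- arXiv:2107.03284 — 2 statements merged into one kernel-verified Lean document; each statement's English description precedes it below -/
import Mathlib

section
/- Let T > 0 and g : [0,T] → ℝ be a Lipschitz continuous function with g(t) ≥ 0 for all t ∈ [0,T]. If the integral ∫₀ᵀ 1/g(s) ds is finite, then g(t) > 0 for all t ∈ [0,T]. -/
open MeasureTheory Set

/-- If `(s - c)⁻¹` were integrable on an interval with `c` strictly inside, contradiction.
Key step: from finiteness of the lintegral of `(ofReal (g s))⁻¹` and `g s ≤ K * |s - t₀|`,
deduce integrability of `s ↦ (K * (s - t₀))⁻¹` on a one-sided interval. -/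
private lemma aux_int {a b t₀ K : ℝ} (hK : 0 < K) (hab : a ≤ b)
    (hfin : ∫⁻ s in Ioo a b, (ENNReal.ofReal (K * |s - t₀|))⁻¹ < ⊤) :
    IntegrableOn (fun s => (K * |s - t₀|)⁻¹) (Ioo a b) := by
  constructor
  · exact (((measurable_id.sub_const t₀).abs.const_mul K).inv).aestronglyMeasurable
  · rw [hasFiniteIntegral_iff_ofReal]
    · calc ∫⁻ s in Ioo a b, ENNReal.ofReal ((K * |s - t₀|)⁻¹)
          ≤ ∫⁻ s in Ioo a b, (ENNReal.ofReal (K * |s - t₀|))⁻¹ := by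
            refine setLIntegral_mono' measurableSet_Ioo fun s _ => ?_
            rcases eq_or_ne s t₀ with rfl | hs
            · simp
            · rw [ENNReal.ofReal_inv_of_pos (mul_pos hK (abs_pos.2 (sub_ne_zero.2 hs)))]
      _ < ⊤ := hfin
    · filter_upwards with s using by positivity

theorem stmt_0_aux {T : ℝ} (hT : 0 < T) {g : ℝ → ℝ} {K : ℝ} (hK : 0 < K) {t₀ : ℝ}
    (ht₀ : t₀ ∈ Icc (0:ℝ) T)
    (hb : ∀ s ∈ Icc (0:ℝ) T, g s ≤ K * |s - t₀|)
    (hint : ∫⁻ s in Icc (0:ℝ) T, (ENNReal.ofReal (g s))⁻¹ < ⊤) : False := by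
  -- lintegral of the reciprocal of `K*|s-t₀|` over `Icc 0 T` is finite
  have key : ∫⁻ s in Icc (0:ℝ) T, (ENNReal.ofReal (K * |s - t₀|))⁻¹ < ⊤ := by
    refine lt_of_le_of_lt (setLIntegral_mono' measurableSet_Icc fun s hs => ?_) hint
    exact ENNReal.inv_le_inv' (ENNReal.ofReal_le_ofReal (hb s hs))
  have habs : IntegrableOn (fun s => (K * |s - t₀|)⁻¹) (Ioo 0 T) := by
    refine aux_int hK hT.le (lt_of_le_of_lt (lintegral_mono_set Ioo_subset_Icc_self) key)
  -- hence `(s - t₀)⁻¹` is interval integrable on `0..T`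
  have hii : IntervalIntegrable (fun s => (s - t₀)⁻¹) volume 0 T := by
    rw [intervalIntegrable_iff_integrableOn_Ioo_of_le hT.le]
    have h1 : IntegrableOn (fun s => K * (K * |s - t₀|)⁻¹) (Ioo 0 T) :=
      habs.const_mul K
    have h2 : IntegrableOn (fun s => |s - t₀|⁻¹) (Ioo 0 T) := by
      refine h1.congr_fun (fun s _ => ?_) measurableSet_Ioo
      show K * (K * |s - t₀|)⁻¹ = |s - t₀|⁻¹
      rw [mul_inv, ← mul_assoc, mul_inv_cancel₀ hK.ne', one_mul]
    refine (h2.norm.mono' ?_ ?_)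
    · exact ((measurable_id.sub_const t₀).inv).aestronglyMeasurable
    · filter_upwards with s
      simp [abs_inv]
  rw [intervalIntegrable_sub_inv_iff] at hii
  rcases hii with h | h
  · exact hT.ne h
  · exact h (by rwa [uIcc_of_le hT.le])

/-- A nonnegative Lipschitz function on `[0,T]` whose (extended-real) reciprocal has finite
Lebesgue integral is strictly positive on `[0,T]`. -/
theorem stmt_0 (T : ℝ) (hT : 0 < T) (g : ℝ → ℝ) (C : NNReal)
    (hLip : LipschitzOnWith C g (Icc 0 T))
    (hpos : ∀ t ∈ Icc (0:ℝ) T, 0 ≤ g t)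
    (hint : ∫⁻ s in Icc (0:ℝ) T, (ENNReal.ofReal (g s))⁻¹ < ⊤) :
    ∀ t ∈ Icc (0:ℝ) T, 0 < g t := by
  intro t₀ ht₀
  by_contra h
  have hg0 : g t₀ = 0 := le_antisymm (not_lt.1 h) (hpos t₀ ht₀)
  refine stmt_0_aux hT (K := (C : ℝ) + 1) (by positivity) ht₀ (fun s hs => ?_) hint
  have := hLip.dist_le_mul s hs t₀ ht₀
  rw [Real.dist_eq, Real.dist_eq, hg0, sub_zero] at this
  calc g s ≤ |g s| := le_abs_self _
    _ ≤ (C : ℝ) * |s - t₀| := this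
    _ ≤ ((C : ℝ) + 1) * |s - t₀| := by
        have := abs_nonneg (s - t₀); nlinarith
end

section
/- Let T > 0 and let e : [t⁰, t̂] → ℝᵐ (t⁰ < t̂ ≤ t⁰+T) and φ : [t⁰, t̂] → (0,∞) be Lipschitz continuous with φ(t)‖e(t)‖ < 1 on [t⁰, t̂) and φ(t̂)‖e(t̂)‖ = 1. Then ∫_{t⁰}^{t̂} 1/(1 − φ(t)²‖e(t)‖²) dt = ∞. -/
open MeasureTheory Set

set_option maxHeartbeats 1000000 in
/-- If the error is Lipschitz, stays strictly inside the funnel on `[t⁰,t̂)` and touches the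
funnel boundary at `t̂`, then the integral of `1/(1 − φ²‖e‖²)` over `[t⁰,t̂]` is infinite. -/
theorem stmt_14 (m : ℕ) (T t0 that : ℝ) (hT : 0 < T) (h1 : t0 < that) (h2 : that ≤ t0 + T)
    (e : ℝ → EuclideanSpace ℝ (Fin m)) (φ : ℝ → ℝ) (Ce Cφ : NNReal)
    (heLip : LipschitzOnWith Ce e (Icc t0 that))
    (hφLip : LipschitzOnWith Cφ φ (Icc t0 that))
    (hφpos : ∀ t ∈ Icc t0 that, 0 < φ t)
    (hin : ∀ t ∈ Ico t0 that, φ t * ‖e t‖ < 1)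
    (htouch : φ that * ‖e that‖ = 1) :
    ∫⁻ t in Icc t0 that, (ENNReal.ofReal (1 - φ t ^ 2 * ‖e t‖ ^ 2))⁻¹ = ⊤ := by
  have hbmem : that ∈ Icc t0 that := ⟨h1.le, le_rfl⟩
  -- bound for ‖e t‖
  set M : ℝ := ‖e t0‖ + Ce * (that - t0) with hM
  have hMe : ∀ t ∈ Icc t0 that, ‖e t‖ ≤ M := by
    intro t ht
    have := heLip.dist_le_mul t ht t0 ⟨le_rfl, h1.le⟩
    have h3 : ‖e t‖ - ‖e t0‖ ≤ dist (e t) (e t0) := by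
      rw [dist_eq_norm]; exact norm_sub_norm_le _ _
    have h4 : dist t t0 ≤ that - t0 := by
      rw [Real.dist_eq, abs_of_nonneg (by linarith [ht.1])]; linarith [ht.2]
    nlinarith [this, mul_le_mul_of_nonneg_left h4 Ce.coe_nonneg]
  set Mφ : ℝ := φ that + Cφ * (that - t0) with hMφ
  have hφb : 0 < φ that := hφpos that hbmem
  have hdφ : ∀ t ∈ Icc t0 that, |φ t - φ that| ≤ Cφ * (that - t) := by
    intro t ht
    have := hφLip.dist_le_mul t ht that hbmem
    rwa [Real.dist_eq, Real.dist_eq, abs_sub_comm t that,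
      abs_of_nonneg (by linarith [ht.2] : (0:ℝ) ≤ that - t)] at this
  have hMφe : ∀ t ∈ Icc t0 that, φ t ≤ Mφ := by
    intro t ht
    have h5 := abs_le.mp (hdφ t ht)
    have : (Cφ : ℝ) * (that - t) ≤ Cφ * (that - t0) :=
      mul_le_mul_of_nonneg_left (by linarith [ht.1]) Cφ.coe_nonneg
    rw [hMφ]; linarith
  set K0 : ℝ := Cφ * M + Mφ * Ce with hK0
  set K : ℝ := 2 * K0 + 1 with hK
  have hM0 : 0 ≤ M := le_trans (norm_nonneg _) (hMe t0 ⟨le_rfl, h1.le⟩)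
  have hMφ0 : 0 ≤ Mφ := le_trans hφb.le (hMφe that hbmem)
  have hK00 : 0 ≤ K0 := by positivity
  have hKpos : 0 < K := by positivity
  -- key pointwise bound
  have hg : ∀ t ∈ Icc t0 that, 1 - φ t ^ 2 * ‖e t‖ ^ 2 ≤ K * (that - t) := by
    intro t ht
    have hh1 : φ t * ‖e t‖ ≤ 1 := by
      rcases eq_or_lt_of_le ht.2 with h | h
      · rw [h, htouch]
      · exact (hin t ⟨ht.1, h⟩).le
    have hh0 : 0 ≤ φ t * ‖e t‖ := mul_nonneg (hφpos t ht).le (norm_nonneg _)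
    have hde : |‖e t‖ - ‖e that‖| ≤ Ce * (that - t) := by
      have := heLip.dist_le_mul t ht that hbmem
      rw [Real.dist_eq, abs_sub_comm t that,
        abs_of_nonneg (by linarith [ht.2] : (0:ℝ) ≤ that - t)] at this
      refine le_trans ?_ this
      rw [dist_eq_norm]; exact abs_norm_sub_norm_le _ _
    have hee : ‖e t‖ ≤ M := hMe t ht
    have hdh : 1 - φ t * ‖e t‖ ≤ K0 * (that - t) := by
      have heq : 1 - φ t * ‖e t‖ = (φ that * ‖e that‖ - φ t * ‖e that‖)
          + (φ t * ‖e that‖ - φ t * ‖e t‖) := by rw [htouch]; ring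
      rw [heq]
      have heb : ‖e that‖ ≤ M := hMe that hbmem
      have e1 : φ that * ‖e that‖ - φ t * ‖e that‖ ≤ Cφ * (that - t) * M := by
        have := abs_le.mp (hdφ t ht)
        nlinarith [norm_nonneg (e that)]
      have e2 : φ t * ‖e that‖ - φ t * ‖e t‖ ≤ Mφ * (Ce * (that - t)) := by
        have h6 := abs_le.mp hde
        have h7 := hMφe t ht
        have h8 : 0 ≤ (Ce : ℝ) * (that - t) :=
          mul_nonneg Ce.coe_nonneg (by linarith [ht.2])
        nlinarith [(hφpos t ht).le]
      rw [hK0]; nlinarith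
    have key : 1 - φ t ^ 2 * ‖e t‖ ^ 2 = (1 - φ t * ‖e t‖) * (1 + φ t * ‖e t‖) := by ring
    rw [key]
    have h5 : 0 ≤ 1 - φ t * ‖e t‖ := by linarith
    have : (1 - φ t * ‖e t‖) * (1 + φ t * ‖e t‖) ≤ K0 * (that - t) * 2 := by nlinarith
    have h9 : 0 ≤ that - t := by linarith [ht.2]
    nlinarith
  -- divergence of ∫ 1/(that - t)
  have hdiv : ∫⁻ t in Ioo t0 that, ENNReal.ofReal ((that - t)⁻¹) = ⊤ := by
    by_contra hne
    have hmeas : AEStronglyMeasurable (fun t : ℝ => (that - t)⁻¹)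
        (volume.restrict (Ioo t0 that)) :=
      ((measurable_const.sub measurable_id).inv).aestronglyMeasurable
    have hnn : 0 ≤ᵐ[volume.restrict (Ioo t0 that)] fun t : ℝ => (that - t)⁻¹ := by
      filter_upwards [ae_restrict_mem measurableSet_Ioo] with t ht
      exact inv_nonneg.mpr (by linarith [ht.2])
    have hint : IntegrableOn (fun t : ℝ => (that - t)⁻¹) (Ioo t0 that) :=
      (lintegral_ofReal_ne_top_iff_integrable hmeas hnn).mp hne
    have hII : IntervalIntegrable (fun t : ℝ => (that - t)⁻¹) volume t0 that :=
      (intervalIntegrable_iff_integrableOn_Ioo_of_le h1.le).mpr hint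
    have hII2 := (hII.comp_sub_left that).symm
    have heqf : (fun x : ℝ => (that - (that - x))⁻¹) = fun x : ℝ => x⁻¹ := by
      funext x; rw [sub_sub_cancel]
    rw [heqf, sub_self] at hII2
    have hint2 : IntegrableOn (fun x : ℝ => x⁻¹) (Ioo 0 (that - t0)) :=
      (intervalIntegrable_iff_integrableOn_Ioo_of_le (by linarith)).mp hII2
    have hint3 : IntegrableOn (fun x : ℝ => x ^ (-1 : ℝ)) (Ioo 0 (that - t0)) := by
      refine hint2.congr_fun (fun x hx => ?_) measurableSet_Ioo
      rw [Real.rpow_neg_one]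
    have := (intervalIntegral.integrableOn_Ioo_rpow_iff (by linarith : (0:ℝ) < that - t0)).mp hint3
    linarith
  -- divergence with constant K
  have hdivK : ∫⁻ t in Ioo t0 that, (ENNReal.ofReal (K * (that - t)))⁻¹ = ⊤ := by
    have hcongr : ∫⁻ t in Ioo t0 that, (ENNReal.ofReal (K * (that - t)))⁻¹
        = ∫⁻ t in Ioo t0 that, ENNReal.ofReal K⁻¹ * ENNReal.ofReal ((that - t)⁻¹) := by
      refine setLIntegral_congr_fun measurableSet_Ioo (fun t ht => ?_)
      have hpos : 0 < K * (that - t) := mul_pos hKpos (by linarith [ht.2])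
      rw [← ENNReal.ofReal_inv_of_pos hpos, mul_inv, ENNReal.ofReal_mul (by positivity)]
    rw [hcongr, lintegral_const_mul' _ _ ENNReal.ofReal_ne_top, hdiv, ENNReal.mul_top]
    rw [ne_eq, ENNReal.ofReal_eq_zero, not_le]
    positivity
  -- compare
  refine top_le_iff.mp ?_
  rw [← hdivK]
  refine le_trans (lintegral_mono_ae ?_) (lintegral_mono_set Ioo_subset_Icc_self)
  filter_upwards [ae_restrict_mem measurableSet_Ioo] with t ht
  refine ENNReal.inv_le_inv.mpr (ENNReal.ofReal_le_ofReal ?_)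
  exact hg t ⟨ht.1.le, ht.2.le⟩
end
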